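/- Let R be a star ring, i.e., a ring equipped with an additive anti-automorphism x ↦ x* with (x*)* = x and (x*y)* = y* * x*. Let D : R → R be a derivation (additive with D(x*y) = D(x)*y + x*D(y)) that commutes with the star operation: D(x*) = (D(x))* for all x. Let u ∈ R be a unit with u* = u⁻¹, and let Y ∈ R satisfy D(u) = −Y*u. Then Y* = −Y. -/
import Mathlib


/-- If a derivation `D` commutes with the star operation, `u` is a unit with
`u* = u⁻¹`, and `D u = −Y u`, then `Y* = −Y`. -/
theorem negative_part_anti_selfadjoint {R : Type*} [Ring R] [StarRing R]
    (D : R → R)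
    (hadd : ∀ x y : R, D (x + y) = D x + D y)
    (hmul : ∀ x y : R, D (x * y) = D x * y + x * D y)
    (hstar : ∀ x : R, D (star x) = star (D x))
    (u : Rˣ) (hu : star (u : R) = ((u⁻¹ : Rˣ) : R))
    (Y : R) (hY : D (u : R) = -Y * (u : R)) :
    star Y = -Y := by
  have hD1 : D 1 = 0 := by
    have := hmul 1 1
    simp only [one_mul, mul_one] at this
    exact left_eq_add.mp this
  have key : D ((u : R) * star (u : R)) = 0 := by
    rw [hu]
    simp [hD1]
  rw [hmul] at key
  rw [hY, hstar, hY, hu] at key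
  have h1 : (-Y * (u : R)) * ((u⁻¹ : Rˣ) : R) = -Y := by
    rw [mul_assoc]; simp
  have h2 : star (-Y * (u : R)) = ((u⁻¹ : Rˣ) : R) * star (-Y) := by
    rw [star_mul, hu]
  rw [h1, h2] at key
  have h3 : (u : R) * (((u⁻¹ : Rˣ) : R) * star (-Y)) = star (-Y) := by
    rw [← mul_assoc]; simp
  rw [h3, star_neg] at key
  have : star Y + (-Y + -star Y) = star Y + 0 := by rw [key]
  simpa [add_assoc] using this.symm
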